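/- Let ρ > 1, c ≥ 0 and let κ : [0,T] → W be continuous with κ(0) = 0 and |(δ̂κ)_{ts}| ≤ c (t−s)^ρ for all (t,s) ∈ Δ_T. Then κ(t) = 0 for all t ∈ [0,T]. -/

import Mathlib

/-- If `κ(0) = 0` and `|(δ̂κ)_{ts}| ≤ c (t−s)^ρ` with `ρ > 1`, then `κ ≡ 0`. -/
theorem kappa_eq_zero_of_hat_delta_small
    {W : Type*} [NormedAddCommGroup W] [NormedSpace ℝ W]
    (T : ℝ) (hT : 0 < T)
    (S : ℝ → W →L[ℝ] W)
    (hS0 : S 0 = ContinuousLinearMap.id ℝ W)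
    (hSadd : ∀ t s : ℝ, 0 ≤ t → 0 ≤ s → S (t + s) = (S t).comp (S s))
    (cS : ℝ) (hScS : ∀ t : ℝ, 0 ≤ t → t ≤ T → ‖S t‖ ≤ cS)
    (ρ c : ℝ) (hρ : 1 < ρ) (hc : 0 ≤ c)
    (κ : ℝ → W) (hκcont : ContinuousOn κ (Set.Icc 0 T)) (hκ0 : κ 0 = 0)
    (hκ : ∀ s t : ℝ, 0 ≤ s → s ≤ t → t ≤ T →
      ‖κ t - S (t - s) (κ s)‖ ≤ c * (t - s) ^ ρ) :
    ∀ t : ℝ, 0 ≤ t → t ≤ T → κ t = 0 := by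
  intro t ht0 htT
  rcases eq_or_lt_of_le ht0 with h | htpos
  · rw [← h]; exact hκ0
  have hcS : 0 ≤ cS := le_trans (norm_nonneg _) (hScS 0 le_rfl hT.le)
  have key : ∀ n : ℕ, 0 < n → ‖κ t‖ ≤ cS * c * t ^ ρ * (n : ℝ) ^ (1 - ρ) := by
    intro n hn
    have hn' : (0:ℝ) < n := Nat.cast_pos.mpr hn
    set hs := t / n with hh
    have hs_pos : 0 < hs := div_pos htpos hn'
    set f : ℕ → W := fun i => S (t - i * hs) (κ (i * hs)) with hf
    have hih : ∀ i : ℕ, i ≤ n → (i:ℝ) * hs ≤ t := by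
      intro i hi
      have h1 : (i:ℝ) ≤ n := Nat.cast_le.mpr hi
      have : (i:ℝ) * hs ≤ n * hs := by nlinarith
      calc (i:ℝ) * hs ≤ n * hs := this
        _ = t := by rw [hh]; field_simp
    have hterm : ∀ i ∈ Finset.range n, ‖f (i+1) - f i‖ ≤ cS * (c * hs ^ ρ) := by
      intro i hi
      rw [Finset.mem_range] at hi
      have h1 : ((i:ℝ)+1) * hs ≤ t := by
        have := hih (i+1) hi
        push_cast at this; linarith
      have h0 : (0:ℝ) ≤ (i:ℝ) * hs := by positivity
      have h2 : (i:ℝ) * hs ≤ ((i:ℝ)+1) * hs := by nlinarith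
      have hsplit : t - (i:ℝ) * hs = (t - ((i:ℝ)+1) * hs) + hs := by ring
      have hrec : S (t - (i:ℝ) * hs) =
          (S (t - ((i:ℝ)+1) * hs)).comp (S hs) := by
        rw [hsplit]; exact hSadd _ _ (by linarith) hs_pos.le
      have hfi : f (i+1) - f i
          = S (t - ((i:ℝ)+1) * hs) (κ (((i:ℝ)+1) * hs) - S hs (κ ((i:ℝ) * hs))) := by
        simp only [hf, hrec, ContinuousLinearMap.comp_apply, map_sub]
        push_cast
        ring_nf
      rw [hfi]
      have hnormS : ‖S (t - ((i:ℝ)+1) * hs)‖ ≤ cS :=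
        hScS _ (by linarith) (by linarith)
      have hinc : ‖κ (((i:ℝ)+1) * hs) - S (((i:ℝ)+1) * hs - (i:ℝ) * hs) (κ ((i:ℝ) * hs))‖
          ≤ c * ((((i:ℝ)+1) * hs - (i:ℝ) * hs)) ^ ρ :=
        hκ _ _ h0 h2 (le_trans h1 htT)
      have hdiff : ((i:ℝ)+1) * hs - (i:ℝ) * hs = hs := by ring
      rw [hdiff] at hinc
      calc ‖S (t - ((i:ℝ)+1) * hs) (κ (((i:ℝ)+1) * hs) - S hs (κ ((i:ℝ) * hs)))‖
          ≤ ‖S (t - ((i:ℝ)+1) * hs)‖ * ‖κ (((i:ℝ)+1) * hs) - S hs (κ ((i:ℝ) * hs))‖ :=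
            (S _).le_opNorm _
        _ ≤ cS * (c * hs ^ ρ) := by
            apply mul_le_mul hnormS hinc (norm_nonneg _) hcS
    have hsum : f n - f 0 = ∑ i ∈ Finset.range n, (f (i+1) - f i) :=
      (Finset.sum_range_sub f n).symm
    have hfn : f n = κ t := by
      have : (n:ℝ) * hs = t := by rw [hh]; field_simp
      simp [hf, this, hS0]
    have hf0 : f 0 = 0 := by simp [hf, hκ0]
    have hbound : ‖κ t‖ ≤ n * (cS * (c * hs ^ ρ)) := by
      have := norm_sum_le_of_le (Finset.range n) hterm
      rw [← hsum, hfn, hf0, sub_zero] at this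
      simpa using this
    have harith : (n : ℝ) * (cS * (c * hs ^ ρ)) = cS * c * t ^ ρ * (n : ℝ) ^ (1 - ρ) := by
      have hdiv : hs ^ ρ = t ^ ρ / (n:ℝ) ^ ρ := Real.div_rpow htpos.le hn'.le ρ
      have hpow : (n:ℝ) ^ (1 - ρ) = (n:ℝ) / (n:ℝ) ^ ρ := by
        rw [Real.rpow_sub hn', Real.rpow_one]
      rw [hdiv, hpow]
      ring
    linarith [hbound, harith.le]
  have hlim : Filter.Tendsto (fun n : ℕ => cS * c * t ^ ρ * (n : ℝ) ^ (1 - ρ))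
      Filter.atTop (nhds 0) := by
    have h1 : Filter.Tendsto (fun x : ℝ => x ^ (1 - ρ)) Filter.atTop (nhds 0) := by
      have := tendsto_rpow_neg_atTop (by linarith : (0:ℝ) < ρ - 1)
      convert this using 2 with x
      ring_nf
    have h2 := h1.comp tendsto_natCast_atTop_atTop (α := ℕ)
    have := h2.const_mul (cS * c * t ^ ρ)
    simpa using this
  have hle : ‖κ t‖ ≤ 0 := by
    refine ge_of_tendsto hlim ?_
    filter_upwards [Filter.eventually_gt_atTop 0] with n hn
    exact key n hn
  have : ‖κ t‖ = 0 := le_antisymm hle (norm_nonneg _)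
  exact norm_eq_zero.mp this
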